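/- arXiv:1307.5962 — 4 statements merged into one kernel-verified Lean document; each statement's English description precedes it below -/
import Mathlib

section
/- Let n, d ≥ 1 and let ρ be a probability measure on the set S = {c : Fin n → ℕ : ∑ c_i = d}. Let A = {j : ∃ c ∈ S, ρ(c) > 0 and c_j > 0}. Assume: (i) ρ(c) > 0 for every c ∈ S supported on A (i.e., c_j = 0 for all j ∉ A); and (ii) for all c ∈ S with ρ(c) > 0 and all j, k with c_j > 0 and c_k > 0, one has ((c_j + δ_{jk})/(c_j + 1)) · (ρ(c)/ρ(c - e_j + e_k)) = ((c_k + 1)/(c_k + δ_{jk})) · (ρ(c - e_k + e_j)/ρ(c)). Then ρ is multinomial: there exist nonnegative reals p_j (j ∈ A) with ∑_{j∈A} p_j = 1 such that ρ(c) = (d! / ∏_j c_j!) · ∏_j p_j^{c_j} for all c ∈ S supported on A. -/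
open Finset
open scoped Classical

noncomputable section MultinomialAux

/-- Move one unit from coordinate `j` to coordinate `k`. -/
def mvv {n : ℕ} (c : Fin n → ℕ) (j k : Fin n) : Fin n → ℕ :=
  fun i => c i - (if i = j then 1 else 0) + (if i = k then 1 else 0)

lemma mvv_self {n : ℕ} {c : Fin n → ℕ} {j : Fin n} (h : 1 ≤ c j) : mvv c j j = c := by
  funext i
  by_cases hij : i = j <;> simp [mvv, hij]
  subst hij; omega

lemma mvv_left {n : ℕ} {c : Fin n → ℕ} {j k : Fin n} (hjk : j ≠ k) : mvv c j k j = c j - 1 := by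
  simp [mvv, hjk]

lemma mvv_right {n : ℕ} {c : Fin n → ℕ} {j k : Fin n} (hjk : j ≠ k) : mvv c j k k = c k + 1 := by
  simp [mvv, hjk.symm]

lemma mvv_other {n : ℕ} {c : Fin n → ℕ} {j k i : Fin n} (hij : i ≠ j) (hik : i ≠ k) :
    mvv c j k i = c i := by
  simp [mvv, hij, hik]

lemma mvv_cancel {n : ℕ} {c : Fin n → ℕ} {j k : Fin n} (h : 1 ≤ c j) :
    mvv (mvv c j k) k j = c := by
  funext i
  rcases eq_or_ne i j with rfl | h1
  · rcases eq_or_ne i k with rfl | h2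
    · simp [mvv]; omega
    · simp [mvv, h2]; omega
  · rcases eq_or_ne i k with rfl | h2
    · simp [mvv, h1]
    · simp [mvv, h1, h2]

lemma sum_mvv {n : ℕ} {c : Fin n → ℕ} {j : Fin n} (k : Fin n) (h : 1 ≤ c j) :
    ∑ i, mvv c j k i = ∑ i, c i := by
  have h1 : ∀ i, c i - (if i = j then 1 else 0) + (if i = j then 1 else 0) = c i := by
    intro i; by_cases hij : i = j <;> simp [hij]
    subst hij; omega
  have hk : ∑ i : Fin n, (if i = k then 1 else 0) = 1 := by simp
  have hj : ∑ i : Fin n, (if i = j then 1 else 0) = 1 := by simp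
  calc ∑ i, mvv c j k i
      = ∑ i, (c i - (if i = j then 1 else 0)) + ∑ i : Fin n, (if i = k then 1 else 0) := by
        rw [← Finset.sum_add_distrib]; rfl
    _ = ∑ i, (c i - (if i = j then 1 else 0)) + ∑ i : Fin n, (if i = j then 1 else 0) := by
        rw [hk, hj]
    _ = ∑ i, c i := by rw [← Finset.sum_add_distrib]; exact Finset.sum_congr rfl fun i _ => h1 i

lemma prod_split {n : ℕ} (g : Fin n → ℝ) {j k : Fin n} (hjk : j ≠ k) :
    ∏ i, g i = g j * (g k * ∏ i ∈ (univ.erase j).erase k, g i) := by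
  rw [← Finset.mul_prod_erase univ g (mem_univ j),
    ← Finset.mul_prod_erase (univ.erase j) g (Finset.mem_erase.mpr ⟨hjk.symm, mem_univ k⟩)]

lemma prod_factorial_mvv {n : ℕ} {c : Fin n → ℕ} {j k : Fin n} (hjk : j ≠ k) (h : 1 ≤ c j) :
    (∏ i, ((mvv c j k i).factorial : ℝ)) * (c j : ℝ)
      = (∏ i, ((c i).factorial : ℝ)) * ((c k : ℝ) + 1) := by
  have hrest : ∏ i ∈ (univ.erase j).erase k, ((mvv c j k i).factorial : ℝ)
      = ∏ i ∈ (univ.erase j).erase k, ((c i).factorial : ℝ) := by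
    refine Finset.prod_congr rfl fun i hi => ?_
    simp only [Finset.mem_erase] at hi
    rw [mvv_other hi.2.1 hi.1]
  rw [prod_split (fun i => ((mvv c j k i).factorial : ℝ)) hjk,
    prod_split (fun i => ((c i).factorial : ℝ)) hjk, hrest, mvv_left hjk, mvv_right hjk]
  obtain ⟨m, hm⟩ : ∃ m, c j = m + 1 := ⟨c j - 1, (Nat.succ_pred_eq_of_pos h).symm⟩
  rw [hm]
  simp [Nat.factorial_succ]
  ring

lemma prod_pow_mvv {n : ℕ} (b : Fin n → ℝ) {c : Fin n → ℕ} {j : Fin n} (k : Fin n)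
    (h : 1 ≤ c j) :
    (∏ i, b i ^ (mvv c j k) i) * b j = (∏ i, b i ^ c i) * b k := by
  rcases eq_or_ne j k with rfl | hjk
  · rw [mvv_self h]
  have hrest : ∏ i ∈ (univ.erase j).erase k, b i ^ (mvv c j k) i
      = ∏ i ∈ (univ.erase j).erase k, b i ^ c i := by
    refine Finset.prod_congr rfl fun i hi => ?_
    simp only [Finset.mem_erase] at hi
    rw [mvv_other hi.2.1 hi.1]
  rw [prod_split (fun i => b i ^ (mvv c j k) i) hjk, prod_split (fun i => b i ^ c i) hjk,
    hrest, mvv_left hjk, mvv_right hjk]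
  obtain ⟨m, hm⟩ : ∃ m, c j = m + 1 := ⟨c j - 1, (Nat.succ_pred_eq_of_pos h).symm⟩
  rw [hm]
  simp only [Nat.add_sub_cancel, pow_succ]
  ring

end MultinomialAux

/-- Lemma 4.3 of the paper: the detailed-balance condition characterizes
multinomial distributions. `c - e_j + e_k` is coordinate-wise in ℕ. -/
theorem multinomial_characterization
    (n d : ℕ) (hn : 1 ≤ n) (hd : 1 ≤ d)
    (ρ : (Fin n → ℕ) → ℝ)
    (hρnonneg : ∀ c, 0 ≤ ρ c)
    (hρsum : ∑ c ∈ Finset.Nat.antidiagonalTuple n d, ρ c = 1)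
    -- A = {j : ∃ c ∈ S, ρ(c) > 0, c_j > 0}
    (A : Set (Fin n))
    (hA : ∀ j, j ∈ A ↔ ∃ c : Fin n → ℕ, ∑ i, c i = d ∧ 0 < ρ c ∧ 0 < c j)
    -- (i) positivity on vectors supported on A
    (hpos : ∀ c : Fin n → ℕ, ∑ i, c i = d → (∀ j, j ∉ A → c j = 0) → 0 < ρ c)
    -- (ii) detailed balance
    (hbal : ∀ c : Fin n → ℕ, ∑ i, c i = d → 0 < ρ c → ∀ j k : Fin n,
      0 < c j → 0 < c k →
      (((c j : ℝ) + (if j = k then 1 else 0)) / ((c j : ℝ) + 1)) *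
        (ρ c / ρ (fun i => c i - (if i = j then 1 else 0) + (if i = k then 1 else 0)))
      = (((c k : ℝ) + 1) / ((c k : ℝ) + (if j = k then 1 else 0))) *
        (ρ (fun i => c i - (if i = k then 1 else 0) + (if i = j then 1 else 0)) / ρ c)) :
    ∃ p : Fin n → ℝ, (∀ j, 0 ≤ p j) ∧ (∀ j, j ∉ A → p j = 0) ∧
      (∑ j ∈ Finset.univ.filter (fun j => j ∈ A), p j = 1) ∧
      ∀ c : Fin n → ℕ, ∑ i, c i = d → (∀ j, j ∉ A → c j = 0) →
        ρ c = ((d.factorial : ℝ) / ∏ j, ((c j).factorial : ℝ)) * ∏ j, p j ^ c j := by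
  classical
  -- find an index j0 ∈ A
  have hex : ∃ c ∈ Finset.Nat.antidiagonalTuple n d, ρ c ≠ 0 := by
    by_contra hcon
    push_neg at hcon
    rw [Finset.sum_eq_zero hcon] at hρsum
    norm_num at hρsum
  obtain ⟨cex, hcmem, hcne⟩ := hex
  have hcsum : ∑ i, cex i = d := Finset.Nat.mem_antidiagonalTuple.mp hcmem
  have hcpos : 0 < ρ cex := lt_of_le_of_ne (hρnonneg cex) (Ne.symm hcne)
  obtain ⟨j0, hj0pos⟩ : ∃ j, 0 < cex j := by
    by_contra hcon; push_neg at hcon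
    have h0 : ∑ i, cex i = 0 := Finset.sum_eq_zero fun i _ => Nat.le_zero.mp (hcon i)
    omega
  have hj0A : j0 ∈ A := (hA j0).mpr ⟨cex, hcsum, hcpos, hj0pos⟩
  -- the base point c0
  set c0 : Fin n → ℕ := fun i => if i = j0 then d else 0 with hc0
  have hc0j0 : c0 j0 = d := by simp [hc0]
  have hc0sum : ∑ i, c0 i = d := by simp [hc0]
  have hc0supp : ∀ j, j ∉ A → c0 j = 0 := by
    intro j hj
    simp only [hc0]
    rw [if_neg]; rintro rfl; exact hj hj0A
  -- the auxiliary function f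
  set f : (Fin n → ℕ) → ℝ := fun c => ρ c * ∏ i, ((c i).factorial : ℝ) with hf
  have hfpos : ∀ c : Fin n → ℕ, ∑ i, c i = d → (∀ j, j ∉ A → c j = 0) → 0 < f c := by
    intro c h1 h2
    exact mul_pos (hpos c h1 h2)
      (Finset.prod_pos fun i _ => by exact_mod_cast Nat.factorial_pos (c i))
  -- support is stable under moves into A
  have hsupp_mvv : ∀ c : Fin n → ℕ, (∀ j, j ∉ A → c j = 0) → ∀ j k, k ∈ A →
      (∀ i, i ∉ A → mvv c j k i = 0) := by
    intro c hsupp j k hkA i hi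
    have hci : c i = 0 := hsupp i hi
    have hik : i ≠ k := by rintro rfl; exact hi hkA
    simp [mvv, hci, hik]
  have hAmem : ∀ (c : Fin n → ℕ), (∀ j, j ∉ A → c j = 0) → ∀ j, 0 < c j → j ∈ A := by
    intro c hsupp j hj
    by_contra h
    rw [hsupp j h] at hj
    omega
  -- the key quadratic relation for f
  have hkey : ∀ c : Fin n → ℕ, ∑ i, c i = d → (∀ j, j ∉ A → c j = 0) → ∀ j k, j ≠ k →
      0 < c j → 0 < c k → f c ^ 2 = f (mvv c j k) * f (mvv c k j) := by
    intro c hsum hsupp j k hjk hcj hck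
    have hjA : j ∈ A := hAmem c hsupp j hcj
    have hkA : k ∈ A := hAmem c hsupp k hck
    have h1sum : ∑ i, mvv c j k i = d := by rw [sum_mvv k hcj]; exact hsum
    have h2sum : ∑ i, mvv c k j i = d := by rw [sum_mvv j hck]; exact hsum
    have h1supp := hsupp_mvv c hsupp j k hkA
    have h2supp := hsupp_mvv c hsupp k j hjA
    have hρc : 0 < ρ c := hpos c hsum hsupp
    have hρ1 : 0 < ρ (mvv c j k) := hpos _ h1sum h1supp
    have hρ2 : 0 < ρ (mvv c k j) := hpos _ h2sum h2supp
    have hb := hbal c hsum hρc j k hcj hck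
    have he1 : ρ (fun i => c i - (if i = j then 1 else 0) + (if i = k then 1 else 0))
        = ρ (mvv c j k) := rfl
    have he2 : ρ (fun i => c i - (if i = k then 1 else 0) + (if i = j then 1 else 0))
        = ρ (mvv c k j) := rfl
    rw [he1, he2, if_neg hjk] at hb
    have hckR : (0:ℝ) < (c k : ℝ) := by exact_mod_cast hck
    have hcjR : (0:ℝ) < (c j : ℝ) := by exact_mod_cast hcj
    have hpoly : (c j : ℝ) * (c k) * (ρ c * ρ c)
        = ((c j : ℝ) + 1) * ((c k : ℝ) + 1) * (ρ (mvv c j k) * ρ (mvv c k j)) := by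
      field_simp at hb
      linear_combination hb
    have hP1 := prod_factorial_mvv (c := c) hjk hcj
    have hP2 := prod_factorial_mvv (c := c) (Ne.symm hjk) hck
    have hcc : ((c j : ℝ) * (c k : ℝ)) ≠ 0 := by positivity
    apply mul_left_cancel₀ hcc
    simp only [hf]
    linear_combination (∏ i, ((c i).factorial : ℝ))^2 * hpoly
      - (ρ (mvv c j k) * ρ (mvv c k j) * (∏ i, ((mvv c k j i).factorial : ℝ)) * (c k : ℝ)) * hP1
      - (ρ (mvv c j k) * ρ (mvv c k j) * (∏ i, ((c i).factorial : ℝ)) * ((c k : ℝ) + 1)) * hP2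
  -- definition of b
  have hfc0 : 0 < f c0 := hfpos c0 hc0sum hc0supp
  have hc0j1 : 1 ≤ c0 j0 := by rw [hc0j0]; exact hd
  set b : Fin n → ℝ := fun j => if j ∈ A then f (mvv c0 j0 j) / f c0 else 0 with hbdef
  have hbj0 : b j0 = 1 := by
    simp only [hbdef, if_pos hj0A, mvv_self hc0j1]
    exact div_self hfc0.ne'
  have hbpos : ∀ j, j ∈ A → 0 < b j := by
    intro j hjA
    have hsum' : ∑ i, mvv c0 j0 j i = d := by rw [sum_mvv j hc0j1]; exact hc0sum
    have hsupp' := hsupp_mvv c0 hc0supp j0 j hjA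
    simp only [hbdef, if_pos hjA]
    exact div_pos (hfpos _ hsum' hsupp') hfc0
  have hbzero : ∀ j, j ∉ A → b j = 0 := by
    intro j hj; simp only [hbdef, if_neg hj]
  have hbspec : ∀ j, j ∈ A → f (mvv c0 j0 j) = b j * f c0 := by
    intro j hjA
    simp only [hbdef, if_pos hjA]
    field_simp
  have hPbpos : ∀ c : Fin n → ℕ, (∀ j, j ∉ A → c j = 0) → 0 < ∏ i, b i ^ c i := by
    intro c hsupp
    apply Finset.prod_pos
    intro i _
    rcases Nat.eq_zero_or_pos (c i) with h0 | h0
    · rw [h0]; norm_num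
    · exact pow_pos (hbpos i (hAmem c hsupp i h0)) _
  have hPbc0 : ∏ i, b i ^ c0 i = 1 := by
    apply Finset.prod_eq_one
    intro i _
    rcases eq_or_ne i j0 with rfl | hi
    · rw [hc0j0, hbj0, one_pow]
    · have : c0 i = 0 := by simp [hc0, hi]
      rw [this, pow_zero]
  -- sum decomposition at j0
  have hx : ∀ c : Fin n → ℕ, ∑ i, c i = d → c j0 + ∑ i ∈ univ.erase j0, c i = d := by
    intro c hc
    rw [Finset.add_sum_erase univ c (mem_univ j0)]
    exact hc
  -- main induction
  have main : ∀ m : ℕ, ∀ c : Fin n → ℕ, ∑ i, c i = d → (∀ j, j ∉ A → c j = 0) →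
      (∑ i ∈ univ.erase j0, c i) ≤ m → f c = f c0 * ∏ i, b i ^ c i := by
    intro m
    induction m with
    | zero =>
      intro c hsum hsupp hm
      have hz : ∀ i ∈ univ.erase j0, c i = 0 := by
        intro i hi
        have := Finset.single_le_sum (f := c) (fun i _ => Nat.zero_le _) hi
        omega
      have hceq : c = c0 := by
        funext i
        rcases eq_or_ne i j0 with hi | hi
        · subst hi
          have := hx c hsum
          have h0 : ∑ i ∈ univ.erase i, c i = 0 := le_antisymm hm (Nat.zero_le _)
          simp only [hc0, if_pos rfl]
          omega
        · rw [hz i (Finset.mem_erase.mpr ⟨hi, mem_univ i⟩)]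
          simp [hc0, hi]
      rw [hceq, hPbc0, mul_one]
    | succ m ih =>
      intro c hsum hsupp hm
      rcases Nat.lt_or_ge (∑ i ∈ univ.erase j0, c i) (m+1) with hlt | hge
      · exact ih c hsum hsupp (Nat.lt_succ_iff.mp hlt)
      have hlev : ∑ i ∈ univ.erase j0, c i = m+1 := le_antisymm hm hge
      -- Case 1: some coordinate other than j0 is ≥ 2
      have case1 : ∀ c' : Fin n → ℕ, ∑ i, c' i = d → (∀ j, j ∉ A → c' j = 0) →
          (∑ i ∈ univ.erase j0, c' i) = m+1 → ∀ j, j ≠ j0 → 2 ≤ c' j →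
          f c' = f c0 * ∏ i, b i ^ c' i := by
        intro c' hsum' hsupp' hlev' j hjj0 hcj2
        have hjA : j ∈ A := hAmem c' hsupp' j (by omega)
        set c1 := mvv c' j j0 with hc1
        set c2 := mvv c1 j j0 with hc2
        have hc1j : c1 j = c' j - 1 := mvv_left hjj0
        have hc1j0 : c1 j0 = c' j0 + 1 := mvv_right hjj0
        have h1sum : ∑ i, c1 i = d := by rw [hc1, sum_mvv j0 (by omega)]; exact hsum'
        have h1supp := hsupp_mvv c' hsupp' j j0 hj0A
        have h2sum : ∑ i, c2 i = d := by rw [hc2, sum_mvv j0 (by omega)]; exact h1sum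
        have h2supp := hsupp_mvv c1 h1supp j j0 hj0A
        have hlev1 : ∑ i ∈ univ.erase j0, c1 i ≤ m := by
          have e1 := hx c1 h1sum
          have e2 := hx c' hsum'
          omega
        have hlev2 : ∑ i ∈ univ.erase j0, c2 i ≤ m := by
          have e1 := hx c2 h2sum
          have e2 := hx c1 h1sum
          have h2j0 : c2 j0 = c1 j0 + 1 := mvv_right hjj0
          omega
        have hfc1 := ih c1 h1sum h1supp hlev1
        have hfc2 := ih c2 h2sum h2supp hlev2
        have hrel := hkey c1 h1sum h1supp j0 j (Ne.symm hjj0) (by omega) (by omega)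
        have hcanc : mvv c1 j0 j = c' := mvv_cancel (by omega)
        rw [hcanc] at hrel
        -- hrel : f c1 ^ 2 = f c' * f (mvv c1 j j0) = f c' * f c2
        have hq1 := prod_pow_mvv b (c := c') (j := j) j0 (by omega)
        have hq2 := prod_pow_mvv b (c := c1) (j := j) j0 (by omega)
        rw [hbj0, mul_one] at hq1 hq2
        -- hq1 : (∏ i, b i ^ c1 i) * b j = ∏ i, b i ^ c' i
        have hfc2pos : 0 < f c2 := hfpos c2 h2sum h2supp
        apply mul_right_cancel₀ hfc2pos.ne'
        calc f c' * f c2 = f c1 ^ 2 := hrel.symm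
          _ = (f c0 * ∏ i, b i ^ c1 i) ^ 2 := by rw [hfc1]
          _ = (f c0 * ∏ i, b i ^ c' i) * (f c0 * ∏ i, b i ^ c2 i) := by
              rw [← hq1, ← hq2]; ring
          _ = (f c0 * ∏ i, b i ^ c' i) * f c2 := by rw [hfc2]
      -- now the general level m+1 case
      by_cases hbig : ∃ j, j ≠ j0 ∧ 2 ≤ c j
      · obtain ⟨j, hjj0, hj2⟩ := hbig
        exact case1 c hsum hsupp hlev j hjj0 hj2
      push_neg at hbig
      obtain ⟨j, hjmem, hjpos⟩ : ∃ j ∈ univ.erase j0, 0 < c j := by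
        by_contra hcon
        push_neg at hcon
        have h0 : ∑ i ∈ univ.erase j0, c i = 0 :=
          Finset.sum_eq_zero fun i hi => Nat.le_zero.mp (hcon i hi)
        omega
      have hjj0 : j ≠ j0 := (Finset.mem_erase.mp hjmem).1
      have hcj1 : c j = 1 := le_antisymm (by have := hbig j hjj0; omega) hjpos
      have hjA : j ∈ A := hAmem c hsupp j hjpos
      rcases Nat.eq_zero_or_pos m with rfl | hm1
      · -- level exactly 1 : c = mvv c0 j0 j
        have hother : ∀ l, l ≠ j0 → l ≠ j → c l = 0 := by
          intro l hlj0 hlj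
          have hsub : ({j, l} : Finset (Fin n)) ⊆ univ.erase j0 := by
            intro x hx
            simp only [Finset.mem_insert, Finset.mem_singleton] at hx
            rcases hx with h | h
            · rw [h]; exact hjmem
            · rw [h]; exact Finset.mem_erase.mpr ⟨hlj0, mem_univ l⟩
          have hple := Finset.sum_le_sum_of_subset (f := c) hsub
          rw [Finset.sum_pair (Ne.symm hlj)] at hple
          omega
        have hcj0d : c j0 + 1 = d := by
          have := hx c hsum
          omega
        have hceq : c = mvv c0 j0 j := by
          funext i
          rcases eq_or_ne i j0 with hi | hi
          · subst hi
            rw [mvv_left (Ne.symm hjj0)]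
            simp only [hc0, if_pos rfl]
            omega
          rcases eq_or_ne i j with hij | hij
          · subst hij
            rw [mvv_right (Ne.symm hjj0), hcj1]
            simp [hc0, hi]
          · rw [mvv_other hi hij, hother i hi hij]
            simp [hc0, hi]
        have hqq := prod_pow_mvv b (c := c0) (j := j0) j hc0j1
        rw [hbj0, mul_one, hPbc0, one_mul] at hqq
        -- hqq : ∏ i, b i ^ (mvv c0 j0 j) i = b j
        rw [hceq, hbspec j hjA, hqq]
        ring
      · -- level ≥ 2 : two distinct unit coordinates
        obtain ⟨l, hlmem, hlpos⟩ : ∃ l ∈ (univ.erase j0).erase j, 0 < c l := by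
          by_contra hcon
          push_neg at hcon
          have h0 : ∑ i ∈ (univ.erase j0).erase j, c i = 0 :=
            Finset.sum_eq_zero fun i hi => Nat.le_zero.mp (hcon i hi)
          have := Finset.add_sum_erase (univ.erase j0) c hjmem
          omega
        have hlj : l ≠ j := (Finset.mem_erase.mp hlmem).1
        have hlj0 : l ≠ j0 := (Finset.mem_erase.mp (Finset.mem_erase.mp hlmem).2).1
        have hcl1 : c l = 1 := le_antisymm (by have := hbig l hlj0; omega) hlpos
        have hlA : l ∈ A := hAmem c hsupp l hlpos
        set z1 := mvv c j l with hz1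
        set z2 := mvv c l j with hz2
        have hz1sum : ∑ i, z1 i = d := by rw [hz1, sum_mvv l (by omega)]; exact hsum
        have hz2sum : ∑ i, z2 i = d := by rw [hz2, sum_mvv j (by omega)]; exact hsum
        have hz1supp := hsupp_mvv c hsupp j l hlA
        have hz2supp := hsupp_mvv c hsupp l j hjA
        have hz1lev : ∑ i ∈ univ.erase j0, z1 i = m + 1 := by
          have e1 := hx z1 hz1sum
          have e2 := hx c hsum
          have : z1 j0 = c j0 := mvv_other (Ne.symm hjj0) (Ne.symm hlj0)
          omega
        have hz2lev : ∑ i ∈ univ.erase j0, z2 i = m + 1 := by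
          have e1 := hx z2 hz2sum
          have e2 := hx c hsum
          have : z2 j0 = c j0 := mvv_other (Ne.symm hlj0) (Ne.symm hjj0)
          omega
        have hz1l : z1 l = c l + 1 := mvv_right (Ne.symm hlj)
        have hz2j : z2 j = c j + 1 := mvv_right hlj
        have hfz1 := case1 z1 hz1sum hz1supp hz1lev l hlj0 (by omega)
        have hfz2 := case1 z2 hz2sum hz2supp hz2lev j hjj0 (by omega)
        have hrel := hkey c hsum hsupp j l (Ne.symm hlj) hjpos hlpos
        have hq1 := prod_pow_mvv b (c := c) (j := j) l (by omega)
        have hq2 := prod_pow_mvv b (c := c) (j := l) j (by omega)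
        -- hq1 : (∏ i, b i ^ z1 i) * b j = (∏ i, b i ^ c i) * b l
        have hbj : 0 < b j := hbpos j hjA
        have hbl : 0 < b l := hbpos l hlA
        have hsq : f c ^ 2 = (f c0 * ∏ i, b i ^ c i) ^ 2 := by
          rw [hrel, hfz1, hfz2]
          apply mul_left_cancel₀ (mul_pos hbj hbl).ne'
          calc (b j * b l) * ((f c0 * ∏ i, b i ^ z1 i) * (f c0 * ∏ i, b i ^ z2 i))
              = (f c0 * ((∏ i, b i ^ z1 i) * b j)) * (f c0 * ((∏ i, b i ^ z2 i) * b l)) := by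
                ring
            _ = (f c0 * ((∏ i, b i ^ c i) * b l)) * (f c0 * ((∏ i, b i ^ c i) * b j)) := by
                rw [hq1, hq2]
            _ = (b j * b l) * (f c0 * ∏ i, b i ^ c i) ^ 2 := by ring
        have hfcpos : 0 < f c := hfpos c hsum hsupp
        have hFpos : 0 < f c0 * ∏ i, b i ^ c i := mul_pos hfc0 (hPbpos c hsupp)
        nlinarith [hsq, hfcpos, hFpos]
  have hmain : ∀ c : Fin n → ℕ, ∑ i, c i = d → (∀ j, j ∉ A → c j = 0) →
      f c = f c0 * ∏ i, b i ^ c i :=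
    fun c h1 h2 => main (∑ i ∈ univ.erase j0, c i) c h1 h2 le_rfl
  set S : ℝ := ∑ j ∈ univ.filter (fun j => j ∈ A), b j with hSdef
  have hSpos : 0 < S := Finset.sum_pos (fun j hj => hbpos j (Finset.mem_filter.mp hj).2)
    ⟨j0, Finset.mem_filter.mpr ⟨mem_univ j0, hj0A⟩⟩
  set p : Fin n → ℝ := fun j => b j / S with hpdef
  have hbp : ∀ j, b j = S * p j := by
    intro j; simp only [hpdef]; field_simp
  have hsum_p_univ : ∑ j, p j = 1 := by
    have h1 : ∑ j ∈ univ.filter (fun j => ¬ j ∈ A), b j = 0 :=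
      Finset.sum_eq_zero fun j hj => hbzero j (Finset.mem_filter.mp hj).2
    have h2 : ∑ j, b j = S := by
      rw [hSdef, ← Finset.sum_filter_add_sum_filter_not univ (fun j => j ∈ A) b, h1, add_zero]
    simp only [hpdef]
    rw [← Finset.sum_div, h2, div_self hSpos.ne']
  have hdfac_pos : (0:ℝ) < (d.factorial : ℝ) := by exact_mod_cast Nat.factorial_pos d
  have hform : ∀ c ∈ Finset.Nat.antidiagonalTuple n d,
      ρ c = (f c0 * S ^ d / (d.factorial : ℝ)) *
        ((Nat.multinomial univ c : ℝ) * ∏ i, p i ^ c i) := by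
    intro c hc
    have hcsum2 : ∑ i, c i = d := Finset.Nat.mem_antidiagonalTuple.mp hc
    by_cases hsupp : ∀ j, j ∉ A → c j = 0
    · have hfc := hmain c hcsum2 hsupp
      have hmult : ((∏ i, ((c i).factorial : ℝ)) * (Nat.multinomial univ c : ℝ))
          = (d.factorial : ℝ) := by
        have hspec := Nat.multinomial_spec univ c
        rw [hcsum2] at hspec
        exact_mod_cast hspec
      have hPb : ∏ i, b i ^ c i = S ^ d * ∏ i, p i ^ c i := by
        calc ∏ i, b i ^ c i = ∏ i, (S * p i) ^ c i := by
              refine Finset.prod_congr rfl fun i _ => ?_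
              rw [← hbp i]
          _ = (∏ i : Fin n, S ^ c i) * ∏ i, p i ^ c i := by
              rw [← Finset.prod_mul_distrib]
              exact Finset.prod_congr rfl fun i _ => mul_pow _ _ _
          _ = S ^ d * ∏ i, p i ^ c i := by rw [Finset.prod_pow_eq_pow_sum, hcsum2]
      rw [hPb] at hfc
      have hstep : ρ c * (d.factorial : ℝ)
          = f c0 * S ^ d * ((Nat.multinomial univ c : ℝ) * ∏ i, p i ^ c i) := by
        calc ρ c * (d.factorial : ℝ)
            = ρ c * ((∏ i, ((c i).factorial : ℝ)) * (Nat.multinomial univ c : ℝ)) := by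
              rw [hmult]
          _ = (f c) * (Nat.multinomial univ c : ℝ) := by simp only [hf]; ring
          _ = (f c0 * (S ^ d * ∏ i, p i ^ c i)) * (Nat.multinomial univ c : ℝ) := by rw [hfc]
          _ = f c0 * S ^ d * ((Nat.multinomial univ c : ℝ) * ∏ i, p i ^ c i) := by ring
      rw [div_mul_eq_mul_div, eq_div_iff hdfac_pos.ne']
      linear_combination hstep
    · push_neg at hsupp
      obtain ⟨j, hjA, hcj⟩ := hsupp
      have hρ0 : ρ c = 0 := by
        by_contra hne
        have hposc : 0 < ρ c := lt_of_le_of_ne (hρnonneg c) (Ne.symm hne)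
        exact hjA ((hA j).mpr ⟨c, hcsum2, hposc, Nat.pos_of_ne_zero hcj⟩)
      have hpj : p j = 0 := by simp [hpdef, hbzero j hjA]
      have hp0 : ∏ i, p i ^ c i = 0 :=
        Finset.prod_eq_zero (mem_univ j) (by rw [hpj]; exact zero_pow hcj)
      rw [hρ0, hp0]; ring
  have hK : f c0 * S ^ d / (d.factorial : ℝ) = 1 := by
    have hmt : ∑ c ∈ Finset.Nat.antidiagonalTuple n d,
        (Nat.multinomial univ c : ℝ) * ∏ i, p i ^ c i = (∑ j, p j) ^ d := by
      rw [← Finset.piAntidiag_univ_fin_eq_antidiagonalTuple d n]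
      exact (Finset.sum_pow_eq_sum_piAntidiag univ p d).symm
    have hsum2 : (1:ℝ) = (f c0 * S ^ d / (d.factorial : ℝ)) *
        ∑ c ∈ Finset.Nat.antidiagonalTuple n d,
          (Nat.multinomial univ c : ℝ) * ∏ i, p i ^ c i := by
      rw [Finset.mul_sum, ← hρsum]
      exact Finset.sum_congr rfl hform
    rw [hmt, hsum_p_univ, one_pow, mul_one] at hsum2
    exact hsum2.symm
  refine ⟨p, ?_, ?_, ?_, ?_⟩
  · intro j
    by_cases h : j ∈ A
    · exact le_of_lt (div_pos (hbpos j h) hSpos)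
    · simp [hpdef, hbzero j h]
  · intro j h
    simp [hpdef, hbzero j h]
  · simp only [hpdef]
    rw [← Finset.sum_div, ← hSdef, div_self hSpos.ne']
  · intro c hcsum2 hcsupp
    have hc : c ∈ Finset.Nat.antidiagonalTuple n d := Finset.Nat.mem_antidiagonalTuple.mpr hcsum2
    have hfc := hform c hc
    rw [hK, one_mul] at hfc
    have hfact_pos : (0:ℝ) < ∏ i, ((c i).factorial : ℝ) :=
      Finset.prod_pos fun i _ => by exact_mod_cast Nat.factorial_pos (c i)
    have hmult : ((∏ i, ((c i).factorial : ℝ)) * (Nat.multinomial univ c : ℝ))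
        = (d.factorial : ℝ) := by
      have hspec := Nat.multinomial_spec univ c
      rw [hcsum2] at hspec
      exact_mod_cast hspec
    have hdiv : (d.factorial : ℝ) / (∏ i, ((c i).factorial : ℝ))
        = (Nat.multinomial univ c : ℝ) := by
      rw [eq_comm, eq_div_iff hfact_pos.ne']
      linear_combination hmult
    rw [hfc, hdiv]
end

section
/- Let V be a type (the set of 'states'), and let w : V × V → ℝ be a weight function. Suppose that for every k ≥ 2 and every cyclic sequence v_1, ..., v_k = v_1 in V with all of v_1, ..., v_{k-1} pairwise distinct, one has ∏_{p=1}^{k-1} w(v_p, v_{p+1}) = 1, and suppose w(u, v) · w(v, u) = 1 for all u, v with w(u,v) ≠ 0 (so 2-cycles also have product 1). Then for every m ≥ 2 and every cyclic sequence v_1, ..., v_m = v_1 in V (with possible repetitions), ∏_{p=1}^{m-1} w(v_p, v_{p+1}) = 1, provided each factor w(v_p, v_{p+1}) is nonzero. -/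
open Finset

/-- Abstract form of Lemma 3.4: if the cycle-product condition holds for cycles
without repeated states (and for 2-cycles), then it holds for all cycles. -/
theorem cycle_product_excision {V : Type*} (w : V × V → ℝ)
    (hsimple : ∀ k : ℕ, 2 ≤ k → ∀ v : ℕ → V, v k = v 1 →
      (∀ p q, 1 ≤ p → p < q → q < k → v p ≠ v q) →
      ∏ p ∈ Finset.Ico 1 k, w (v p, v (p + 1)) = 1)
    (hpair : ∀ u v : V, w (u, v) ≠ 0 → w (u, v) * w (v, u) = 1) :
    ∀ m : ℕ, 2 ≤ m → ∀ v : ℕ → V, v m = v 1 →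
      (∀ p ∈ Finset.Ico 1 m, w (v p, v (p + 1)) ≠ 0) →
      ∏ p ∈ Finset.Ico 1 m, w (v p, v (p + 1)) = 1 := by
  intro m
  induction m using Nat.strong_induction_on with
  | _ m ih =>
    intro hm v hvm hnz
    by_cases hdist : ∀ p q, 1 ≤ p → p < q → q < m → v p ≠ v q
    · exact hsimple m hm v hvm hdist
    push_neg at hdist
    obtain ⟨p, q, hp1, hpq, hqm, heq⟩ := hdist
    obtain ⟨e, rfl⟩ : ∃ e, q = p + e := ⟨q - p, by omega⟩
    have he : 1 ≤ e := by omega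
    obtain ⟨m', rfl⟩ : ∃ m', m = m' + e := ⟨m - e, by omega⟩
    have hm' : p + 1 ≤ m' := by omega
    -- the excised loop v_p, ..., v_{p+e} = v_p is a shorter cycle
    have hA : ∏ j ∈ Finset.Ico p (p + e), w (v j, v (j + 1)) = 1 := by
      have key := ih (e + 1) (by omega) (by omega) (fun i => v (p - 1 + i))
        (by show v (p - 1 + (e + 1)) = v (p - 1 + 1)
            rw [show p - 1 + (e + 1) = p + e by omega, show p - 1 + 1 = p by omega]
            exact heq.symm)
        (by intro i hi
            simp only [Finset.mem_Ico] at hi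
            show w (v (p - 1 + i), v (p - 1 + i + 1)) ≠ 0
            exact hnz _ (Finset.mem_Ico.mpr (by omega)))
      rw [Finset.prod_Ico_eq_prod_range] at key ⊢
      rw [show p + e - p = e by omega]
      rw [show e + 1 - 1 = e by omega] at key
      rw [← key]
      refine Finset.prod_congr rfl fun i _ => ?_
      rw [show p + i = p - 1 + (1 + i) by omega]
      rfl
    -- the remaining cycle, skipping indices p+1, ..., p+e
    set z : ℕ → V := fun i => if i ≤ p then v i else v (i + e) with hz
    have hz1 : ∀ i, i + 1 ≤ p → w (z i, z (i + 1)) = w (v i, v (i + 1)) := by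
      intro i hi
      simp only [hz, if_pos (by omega : i ≤ p), if_pos hi]
    have hz2 : ∀ i, p ≤ i → w (z i, z (i + 1)) = w (v (i + e), v (i + e + 1)) := by
      intro i hi
      have h1 : z i = v (i + e) := by
        rcases eq_or_lt_of_le hi with h | h
        · simp only [hz, if_pos (by omega : i ≤ p)]
          rw [← h]; exact heq
        · simp only [hz, if_neg (by omega : ¬ i ≤ p)]
      have h2 : z (i + 1) = v (i + e + 1) := by
        simp only [hz, if_neg (by omega : ¬ i + 1 ≤ p)]
        rw [show i + 1 + e = i + e + 1 by omega]
      rw [h1, h2]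
    have hB : ∏ i ∈ Finset.Ico 1 m', w (z i, z (i + 1)) = 1 := by
      apply ih m' (by omega) (by omega)
      · show z m' = z 1
        have h1 : z m' = v (m' + e) := by
          simp only [hz, if_neg (by omega : ¬ m' ≤ p)]
        have h2 : z 1 = v 1 := by
          rcases eq_or_lt_of_le hp1 with h | h
          · simp only [hz, if_pos (by omega : 1 ≤ p)]
          · simp only [hz, if_pos (by omega : 1 ≤ p)]
        rw [h1, h2, hvm]
      · intro i hi
        simp only [Finset.mem_Ico] at hi
        by_cases hip : i + 1 ≤ p
        · rw [hz1 i hip]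
          exact hnz _ (Finset.mem_Ico.mpr (by omega))
        · rw [hz2 i (by omega)]
          exact hnz _ (Finset.mem_Ico.mpr (by omega))
    -- split and reassemble
    have hsplit1 : ∏ i ∈ Finset.Ico 1 m', w (z i, z (i + 1)) =
        (∏ i ∈ Finset.Ico 1 p, w (v i, v (i + 1))) *
        ∏ i ∈ Finset.Ico (p + e) (m' + e), w (v i, v (i + 1)) := by
      rw [← Finset.prod_Ico_consecutive (fun i => w (z i, z (i + 1)))
        (show 1 ≤ p by omega) (show p ≤ m' by omega)]
      congr 1
      · refine Finset.prod_congr rfl fun i hi => ?_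
        simp only [Finset.mem_Ico] at hi
        exact hz1 i (by omega)
      · rw [Finset.prod_Ico_eq_prod_range, Finset.prod_Ico_eq_prod_range,
          show m' + e - (p + e) = m' - p by omega]
        refine Finset.prod_congr rfl fun i _ => ?_
        rw [hz2 (p + i) (by omega), show p + i + e = p + e + i by omega]
    have hfull : ∏ i ∈ Finset.Ico 1 (m' + e), w (v i, v (i + 1)) =
        ((∏ i ∈ Finset.Ico 1 p, w (v i, v (i + 1))) *
         ∏ i ∈ Finset.Ico p (p + e), w (v i, v (i + 1))) *
        ∏ i ∈ Finset.Ico (p + e) (m' + e), w (v i, v (i + 1)) := by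
      rw [Finset.prod_Ico_consecutive (fun i => w (v i, v (i + 1)))
        (show 1 ≤ p by omega) (show p ≤ p + e by omega),
        Finset.prod_Ico_consecutive (fun i => w (v i, v (i + 1)))
        (show 1 ≤ p + e by omega) (show p + e ≤ m' + e by omega)]
    rw [hfull, hA, mul_one, ← hsplit1, hB]
end

section
/- Let n ≥ 1 and let ρ be a probability measure on {c : Fin n → ℕ, ∑ c = d} for a fixed d ≥ 2, satisfying hypotheses (i) and (ii) of the multinomial characterization lemma (Lemma 4.3). Define, for j ∈ A(ρ) and c with ∑ c = d - 1 supported on A(ρ), P(j | c) = ((c_j + 1) · ρ(c + e_j)) / (∑_{k ∈ A(ρ)} (c_k + 1) · ρ(c + e_k)). Then P(j | c) = P(j | c - e_l + e_m) for all l, m ∈ A(ρ) with c_l ≥ 1, m ≠ j, m ≠ l; consequently P(j | c) does not depend on c. -/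
open Finset
open scoped Classical

/-- Detailed balance in product form: the "star" identity. -/
lemma cpi_star (n d : ℕ) (hd : 2 ≤ d)
    (ρ : (Fin n → ℕ) → ℝ)
    (A : Set (Fin n))
    (hpos : ∀ c : Fin n → ℕ, ∑ i, c i = d → (∀ j, j ∉ A → c j = 0) → 0 < ρ c)
    (hbal : ∀ c : Fin n → ℕ, ∑ i, c i = d → 0 < ρ c → ∀ j k : Fin n,
      0 < c j → 0 < c k →
      (((c j : ℝ) + (if j = k then 1 else 0)) / ((c j : ℝ) + 1)) *
        (ρ c / ρ (fun i => c i - (if i = j then 1 else 0) + (if i = k then 1 else 0)))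
      = (((c k : ℝ) + 1) / ((c k : ℝ) + (if j = k then 1 else 0))) *
        (ρ (fun i => c i - (if i = k then 1 else 0) + (if i = j then 1 else 0)) / ρ c))
    (z : Fin n → ℕ) (hz : ∑ i, z i = d - 2) (hzA : ∀ i, i ∉ A → z i = 0)
    (a b : Fin n) (ha : a ∈ A) (hb : b ∈ A) (hab : a ≠ b) :
    ((z a : ℝ) + 1) * ((z b : ℝ) + 1) *
        (ρ (fun i => z i + (if i = a then 1 else 0) + (if i = b then 1 else 0)))^2
      = ((z a : ℝ) + 2) * ((z b : ℝ) + 2) *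
        (ρ (fun i => z i + (if i = a then 1 else 0) + (if i = a then 1 else 0))) *
        (ρ (fun i => z i + (if i = b then 1 else 0) + (if i = b then 1 else 0))) := by
  have hba : b ≠ a := hab.symm
  set y : Fin n → ℕ := fun i => z i + (if i = a then 1 else 0) + (if i = b then 1 else 0) with hy
  have hsupp : ∀ t : Fin n → ℕ, (∀ i, i ∉ A → t i = 0) → (∑ i, t i = d) → 0 < ρ t := fun t h1 h2 => hpos t h2 h1
  have hzsum : ∑ i, z i + 2 = d := by omega
  have hysum : ∑ i, y i = d := by
    have : ∑ i, y i = (∑ i, z i) + (∑ i, if i = a then 1 else 0) + (∑ i, if i = b then 1 else 0) := by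
      rw [hy]; rw [Finset.sum_add_distrib, Finset.sum_add_distrib]
    simp [this, Finset.sum_ite_eq'] at *
    omega
  have hyA : ∀ i, i ∉ A → y i = 0 := by
    intro i hi
    have h1 : i ≠ a := by rintro rfl; exact hi ha
    have h2 : i ≠ b := by rintro rfl; exact hi hb
    simp [hy, h1, h2, hzA i hi]
  have hyρ : 0 < ρ y := hsupp y hyA hysum
  have hya : 0 < y a := by simp [hy, hba]
  have hyb : 0 < y b := by simp [hy, hab]
  have key := hbal y hysum hyρ a b hya hyb
  have e1 : (fun i => y i - (if i = a then 1 else 0) + (if i = b then 1 else 0))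
      = (fun i => z i + (if i = b then 1 else 0) + (if i = b then 1 else 0)) := by
    funext i
    by_cases h1 : i = a <;> by_cases h2 : i = b <;> simp [hy, h1, h2] at * <;> omega
  have e2 : (fun i => y i - (if i = b then 1 else 0) + (if i = a then 1 else 0))
      = (fun i => z i + (if i = a then 1 else 0) + (if i = a then 1 else 0)) := by
    funext i
    by_cases h1 : i = a <;> by_cases h2 : i = b <;> simp [hy, h1, h2] at * <;> omega
  rw [e1, e2] at key
  have hQaa : 0 < ρ (fun i => z i + (if i = a then 1 else 0) + (if i = a then 1 else 0)) := by
    apply hsupp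
    · intro i hi
      have h1 : i ≠ a := by rintro rfl; exact hi ha
      simp [h1, hzA i hi]
    · have : ∑ i, (z i + (if i = a then 1 else 0) + (if i = a then 1 else 0))
          = (∑ i, z i) + (∑ i, if i = a then 1 else 0) + (∑ i, if i = a then 1 else 0) := by
        rw [Finset.sum_add_distrib, Finset.sum_add_distrib]
      simp [this, Finset.sum_ite_eq']
      omega
  have hQbb : 0 < ρ (fun i => z i + (if i = b then 1 else 0) + (if i = b then 1 else 0)) := by
    apply hsupp
    · intro i hi
      have h1 : i ≠ b := by rintro rfl; exact hi hb
      simp [h1, hzA i hi]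
    · have : ∑ i, (z i + (if i = b then 1 else 0) + (if i = b then 1 else 0))
          = (∑ i, z i) + (∑ i, if i = b then 1 else 0) + (∑ i, if i = b then 1 else 0) := by
        rw [Finset.sum_add_distrib, Finset.sum_add_distrib]
      simp [this, Finset.sum_ite_eq']
      omega
  have hyav : (y a : ℝ) = (z a : ℝ) + 1 := by simp [hy, hab]
  have hyb' : (y b : ℝ) = (z b : ℝ) + 1 := by simp [hy, hba]
  rw [if_neg hab] at key
  rw [hyav, hyb'] at key
  have hza : ((z a : ℝ) + 1 + 1) ≠ 0 := by positivity
  have hzb : ((z b : ℝ) + 1) ≠ 0 := by positivity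
  field_simp [hyρ.ne', hQaa.ne', hQbb.ne'] at key
  linear_combination key


section CPIAux

variable {n d : ℕ} (ρ : (Fin n → ℕ) → ℝ) (A : Set (Fin n))

/-- Proportionality: `(c'_k+1)ρ(c'+e_k) (c_l+1)ρ(c+e_l) = (c_k+1)ρ(c+e_k) (c'_l+1)ρ(c'+e_l)`. -/
lemma cpi_prop (hd : 2 ≤ d)
    (hpos : ∀ c : Fin n → ℕ, ∑ i, c i = d → (∀ j, j ∉ A → c j = 0) → 0 < ρ c)
    (hstar : ∀ z : Fin n → ℕ, (∑ i, z i = d - 2) → (∀ i, i ∉ A → z i = 0) →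
      ∀ a b : Fin n, a ∈ A → b ∈ A → a ≠ b →
      ((z a : ℝ) + 1) * ((z b : ℝ) + 1) *
          (ρ (fun i => z i + (if i = a then 1 else 0) + (if i = b then 1 else 0)))^2
        = ((z a : ℝ) + 2) * ((z b : ℝ) + 2) *
          (ρ (fun i => z i + (if i = a then 1 else 0) + (if i = a then 1 else 0))) *
          (ρ (fun i => z i + (if i = b then 1 else 0) + (if i = b then 1 else 0))))
    (c c' : Fin n → ℕ) (hc : ∑ i, c i = d - 1) (hcA : ∀ i, i ∉ A → c i = 0)
    (l m : Fin n) (hl : l ∈ A) (hm : m ∈ A) (hcl : 1 ≤ c l) (hml : m ≠ l)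
    (hc' : c' = fun i => c i - (if i = l then 1 else 0) + (if i = m then 1 else 0))
    (k : Fin n) (hk : k ∈ A) :
    (((c' k : ℝ) + 1) * ρ (fun i => c' i + (if i = k then 1 else 0))) *
      (((c l : ℝ) + 1) * ρ (fun i => c i + (if i = l then 1 else 0)))
    = (((c k : ℝ) + 1) * ρ (fun i => c i + (if i = k then 1 else 0))) *
      (((c' l : ℝ) + 1) * ρ (fun i => c' i + (if i = l then 1 else 0))) := by
  have hlm : l ≠ m := hml.symm
  set z : Fin n → ℕ := fun i => c i - (if i = l then 1 else 0) with hz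
  -- basic facts about z
  have hzc : ∀ i, c i = z i + (if i = l then 1 else 0) := by
    intro i
    by_cases h : i = l <;> simp [hz, h] <;> omega
  have hzsum : ∑ i, z i = d - 2 := by
    have h1 : ∑ i, c i = (∑ i, z i) + (∑ i, if i = l then (1:ℕ) else 0) := by
      rw [← Finset.sum_add_distrib]
      exact Finset.sum_congr rfl fun i _ => hzc i
    simp [Finset.sum_ite_eq'] at h1
    omega
  have hzA : ∀ i, i ∉ A → z i = 0 := by
    intro i hi
    have := hcA i hi
    simp [hz, this]
  -- c' in terms of z
  have hc'z : ∀ i, c' i = z i + (if i = m then 1 else 0) := by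
    intro i
    by_cases h1 : i = l <;> by_cases h2 : i = m <;> simp [hc', hz, h1, h2] <;> omega
  -- rewrite the ρ-arguments
  have ecl : (fun i => c i + (if i = l then 1 else 0))
      = (fun i => z i + (if i = l then 1 else 0) + (if i = l then 1 else 0)) := by
    funext i; rw [hzc i]
  have eck : (fun i => c i + (if i = k then 1 else 0))
      = (fun i => z i + (if i = l then 1 else 0) + (if i = k then 1 else 0)) := by
    funext i; rw [hzc i]
  have ec'l : (fun i => c' i + (if i = l then 1 else 0))
      = (fun i => z i + (if i = l then 1 else 0) + (if i = m then 1 else 0)) := by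
    funext i; rw [hc'z i]; ring
  have ec'k : (fun i => c' i + (if i = k then 1 else 0))
      = (fun i => z i + (if i = m then 1 else 0) + (if i = k then 1 else 0)) := by
    funext i; rw [hc'z i]
  rw [ecl, eck, ec'l, ec'k]
  -- abbreviations for the Q values
  have Qpos : ∀ a b : Fin n, a ∈ A → b ∈ A →
      0 < ρ (fun i => z i + (if i = a then 1 else 0) + (if i = b then 1 else 0)) := by
    intro a b ha hb
    apply hpos
    · have h1 : ∑ i, (z i + (if i = a then 1 else 0) + (if i = b then 1 else 0))
          = (∑ i, z i) + (∑ i, if i = a then 1 else 0) + (∑ i, if i = b then 1 else 0) := by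
        rw [Finset.sum_add_distrib, Finset.sum_add_distrib]
      simp [h1, Finset.sum_ite_eq']
      omega
    · intro i hi
      have h1 : i ≠ a := by rintro rfl; exact hi ha
      have h2 : i ≠ b := by rintro rfl; exact hi hb
      simp [h1, h2, hzA i hi]
  -- cast facts
  have hck : (c k : ℝ) = (z k : ℝ) + (if k = l then 1 else 0) := by
    rw [hzc k]; push_cast; split <;> norm_num
  have hc'k : (c' k : ℝ) = (z k : ℝ) + (if k = m then 1 else 0) := by
    rw [hc'z k]; push_cast; split <;> norm_num
  have hcll : (c l : ℝ) = (z l : ℝ) + 1 := by rw [hzc l]; push_cast; simp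
  have hc'll : (c' l : ℝ) = (z l : ℝ) := by rw [hc'z l]; simp [hml.symm]
  rw [hck, hc'k, hcll, hc'll]
  by_cases hkl : k = l
  · subst hkl
    simp only [if_pos rfl, hlm]
    rw [show (fun i => z i + (if i = m then 1 else 0) + (if i = k then 1 else 0))
        = (fun i => z i + (if i = k then 1 else 0) + (if i = m then 1 else 0)) from by
      funext i; ring]
    simp
    ring
  · by_cases hkm : k = m
    · subst hkm
      simp only [if_neg hkl, if_pos rfl, if_true]
      norm_num
      have s3 := hstar z hzsum hzA l k hl hk (fun h => hkl h.symm)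
      linear_combination -s3
    · -- k ∉ {l, m}
      simp only [if_neg hkl, if_neg hkm]
      set Qll := ρ (fun i => z i + (if i = l then 1 else 0) + (if i = l then 1 else 0)) with hQll
      set Qmm := ρ (fun i => z i + (if i = m then 1 else 0) + (if i = m then 1 else 0)) with hQmm
      set Qkk := ρ (fun i => z i + (if i = k then 1 else 0) + (if i = k then 1 else 0)) with hQkk
      set Qlm := ρ (fun i => z i + (if i = l then 1 else 0) + (if i = m then 1 else 0)) with hQlm
      set Qlk := ρ (fun i => z i + (if i = l then 1 else 0) + (if i = k then 1 else 0)) with hQlk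
      set Qmk := ρ (fun i => z i + (if i = m then 1 else 0) + (if i = k then 1 else 0)) with hQmk
      have pll : 0 < Qll := Qpos l l hl hl
      have pmm : 0 < Qmm := Qpos m m hm hm
      have pkk : 0 < Qkk := Qpos k k hk hk
      have plm : 0 < Qlm := Qpos l m hl hm
      have plk : 0 < Qlk := Qpos l k hl hk
      have pmk : 0 < Qmk := Qpos m k hm hk
      have s1 := hstar z hzsum hzA m k hm hk (fun h => hkm h.symm)
      have s2 := hstar z hzsum hzA l k hl hk (fun h => hkl h.symm)
      have s3 := hstar z hzsum hzA l m hl hm hlm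
      rw [← hQmk, ← hQmm, ← hQkk] at s1
      rw [← hQlk, ← hQll, ← hQkk] at s2
      rw [← hQlm, ← hQll, ← hQmm] at s3
      -- prove the squared identity, then take square roots
      set X := ((z k : ℝ) + 1) * Qmk * (((z l : ℝ) + 1 + 1) * Qll) with hX
      set Y := ((z k : ℝ) + 1) * Qlk * (((z l : ℝ) + 1) * Qlm) with hY
      have hM : (0:ℝ) < ((z m : ℝ) + 1) * ((z k : ℝ) + 1) * (((z l : ℝ) + 1)^2) := by positivity
      have hsq : X^2 * (((z m : ℝ) + 1) * ((z k : ℝ) + 1) * (((z l : ℝ) + 1)^2))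
          = Y^2 * (((z m : ℝ) + 1) * ((z k : ℝ) + 1) * (((z l : ℝ) + 1)^2)) := by
        have e1 : X^2 * (((z m : ℝ) + 1) * ((z k : ℝ) + 1) * (((z l : ℝ) + 1)^2))
            = ((z k : ℝ)+1)^2 * ((z l : ℝ)+2)^2 * ((z l : ℝ)+1)^2 * Qll^2
              * (((z m : ℝ)+2) * ((z k : ℝ)+2) * Qmm * Qkk) := by
          rw [hX]; linear_combination (((z k : ℝ)+1)^2 * ((z l : ℝ)+2)^2 * ((z l : ℝ)+1)^2 * Qll^2) * s1
        have e2 : Y^2 * (((z m : ℝ) + 1) * ((z k : ℝ) + 1) * (((z l : ℝ) + 1)^2))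
            = ((z k : ℝ)+1)^2 * ((z l : ℝ)+2)^2 * ((z l : ℝ)+1)^2 * Qll^2
              * (((z m : ℝ)+2) * ((z k : ℝ)+2) * Qmm * Qkk) := by
          rw [hY]
          linear_combination (((z k : ℝ)+1)^2 * ((z m : ℝ)+1) * ((z l : ℝ)+1)^3 * Qlm^2) * s2
            + (((z k : ℝ)+1)^2 * ((z l : ℝ)+1)^2 * ((z l : ℝ)+2) * ((z k : ℝ)+2) * Qll * Qkk) * s3
        rw [e1, e2]
      have hXY2 : X^2 = Y^2 := mul_right_cancel₀ hM.ne' hsq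
      have hX0 : 0 ≤ X := by positivity
      have hY0 : 0 ≤ Y := by positivity
      have hXY : X = Y := (sq_eq_sq₀ hX0 hY0).mp hXY2
      linear_combination hXY

end CPIAux


/-- Equations (28)/(29): the main inductive step of the proof of Lemma 4.3.
`c + e_j` and `c - e_l + e_m` are coordinate-wise in ℕ. -/
theorem conditional_probability_independent
    (n d : ℕ) (hn : 1 ≤ n) (hd : 2 ≤ d)
    (ρ : (Fin n → ℕ) → ℝ)
    (hρnonneg : ∀ c, 0 ≤ ρ c)
    (hρsum : ∑ c ∈ Finset.Nat.antidiagonalTuple n d, ρ c = 1)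
    (A : Set (Fin n))
    (hA : ∀ j, j ∈ A ↔ ∃ c : Fin n → ℕ, ∑ i, c i = d ∧ 0 < ρ c ∧ 0 < c j)
    -- hypothesis (i) of Lemma 4.3
    (hpos : ∀ c : Fin n → ℕ, ∑ i, c i = d → (∀ j, j ∉ A → c j = 0) → 0 < ρ c)
    -- hypothesis (ii) of Lemma 4.3: detailed balance (equation (25))
    (hbal : ∀ c : Fin n → ℕ, ∑ i, c i = d → 0 < ρ c → ∀ j k : Fin n,
      0 < c j → 0 < c k →
      (((c j : ℝ) + (if j = k then 1 else 0)) / ((c j : ℝ) + 1)) *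
        (ρ c / ρ (fun i => c i - (if i = j then 1 else 0) + (if i = k then 1 else 0)))
      = (((c k : ℝ) + 1) / ((c k : ℝ) + (if j = k then 1 else 0))) *
        (ρ (fun i => c i - (if i = k then 1 else 0) + (if i = j then 1 else 0)) / ρ c))
    -- the conditional probability P(j | c)
    (P : Fin n → (Fin n → ℕ) → ℝ)
    (hP : ∀ (j : Fin n) (c : Fin n → ℕ), P j c =
      (((c j : ℝ) + 1) * ρ (fun i => c i + if i = j then 1 else 0)) /
        ∑ k ∈ Finset.univ.filter (fun k => k ∈ A),
          (((c k : ℝ) + 1) * ρ (fun i => c i + if i = k then 1 else 0))) :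
    (∀ j ∈ A, ∀ c : Fin n → ℕ, ∑ i, c i = d - 1 → (∀ i, i ∉ A → c i = 0) →
      ∀ l ∈ A, ∀ m ∈ A, 1 ≤ c l → m ≠ j → m ≠ l →
        P j c = P j (fun i => c i - (if i = l then 1 else 0) + (if i = m then 1 else 0))) ∧
    (∀ j ∈ A, ∀ c c' : Fin n → ℕ,
      ∑ i, c i = d - 1 → (∀ i, i ∉ A → c i = 0) →
      ∑ i, c' i = d - 1 → (∀ i, i ∉ A → c' i = 0) →
        P j c = P j c') := by
  have hstar := fun z hz hzA a b ha hb hab =>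
    cpi_star n d hd ρ A hpos hbal z hz hzA a b ha hb hab
  -- positivity of the summands
  have Npos : ∀ b : Fin n → ℕ, ∑ i, b i = d - 1 → (∀ i, i ∉ A → b i = 0) →
      ∀ k, k ∈ A → 0 < ((b k : ℝ) + 1) * ρ (fun i => b i + if i = k then 1 else 0) := by
    intro b hb hbA k hk
    apply mul_pos (by positivity)
    apply hpos
    · have h1 : ∑ i, (b i + if i = k then 1 else 0)
          = (∑ i, b i) + (∑ i, if i = k then 1 else 0) := Finset.sum_add_distrib
      simp [h1, Finset.sum_ite_eq']
      omega
    · intro i hi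
      have h1 : i ≠ k := by rintro rfl; exact hi hk
      simp [h1, hbA i hi]
  have Spos : ∀ b : Fin n → ℕ, ∑ i, b i = d - 1 → (∀ i, i ∉ A → b i = 0) →
      ∀ j, j ∈ A →
      0 < ∑ k ∈ Finset.univ.filter (fun k => k ∈ A),
          (((b k : ℝ) + 1) * ρ (fun i => b i + if i = k then 1 else 0)) := by
    intro b hb hbA j hj
    apply Finset.sum_pos
    · intro k hk
      exact Npos b hb hbA k (Finset.mem_filter.mp hk).2
    · exact ⟨j, Finset.mem_filter.mpr ⟨Finset.mem_univ j, hj⟩⟩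
  -- the sum of the shifted configuration
  have hsum_move : ∀ (c : Fin n → ℕ) (l m : Fin n), m ≠ l → 1 ≤ c l →
      ∑ i, (c i - (if i = l then 1 else 0) + (if i = m then 1 else 0)) = ∑ i, c i := by
    intro c l m hml hcl
    have e : ∀ i, (c i - (if i = l then 1 else 0) + (if i = m then 1 else 0))
        + (if i = l then 1 else 0) = c i + (if i = m then 1 else 0) := by
      intro i
      by_cases h1 : i = l
      · have h2 : i ≠ m := by rintro rfl; exact hml h1
        subst h1
        simp [h2]
        omega
      · by_cases h2 : i = m <;> simp [h1, h2, hml]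
    have h1 : (∑ i, (c i - (if i = l then 1 else 0) + (if i = m then 1 else 0)))
        + (∑ i, if i = l then (1:ℕ) else 0)
        = (∑ i, c i) + (∑ i, if i = m then (1:ℕ) else 0) := by
      rw [← Finset.sum_add_distrib, ← Finset.sum_add_distrib]
      exact Finset.sum_congr rfl fun i _ => e i
    simp [Finset.sum_ite_eq'] at h1
    omega
  -- Part 1
  have part1 : ∀ j ∈ A, ∀ c : Fin n → ℕ, ∑ i, c i = d - 1 → (∀ i, i ∉ A → c i = 0) →
      ∀ l ∈ A, ∀ m ∈ A, 1 ≤ c l → m ≠ j → m ≠ l →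
        P j c = P j (fun i => c i - (if i = l then 1 else 0) + (if i = m then 1 else 0)) := by
    intro j hj c hc hcA l hl m hm hcl hmj hml
    set c'' : Fin n → ℕ := fun i => c i - (if i = l then 1 else 0) + (if i = m then 1 else 0)
      with hc''
    have hc''sum : ∑ i, c'' i = d - 1 := by rw [hc'']; rw [hsum_move c l m hml hcl]; exact hc
    have hc''A : ∀ i, i ∉ A → c'' i = 0 := by
      intro i hi
      have h1 : i ≠ l := by rintro rfl; exact hi hl
      have h2 : i ≠ m := by rintro rfl; exact hi hm
      simp [hc'', h1, h2, hcA i hi]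
    rw [hP j c, hP j c'']
    have hS := Spos c hc hcA j hj
    have hS' := Spos c'' hc''sum hc''A j hj
    rw [div_eq_div_iff hS.ne' hS'.ne']
    rw [Finset.mul_sum, Finset.mul_sum]
    refine Finset.sum_congr rfl fun k hk => ?_
    have hkA : k ∈ A := (Finset.mem_filter.mp hk).2
    have kj := cpi_prop ρ A hd hpos hstar c c'' hc hcA l m hl hm hcl hml hc'' j hj
    have kk := cpi_prop ρ A hd hpos hstar c c'' hc hcA l m hl hm hcl hml hc'' k hkA
    have pl : 0 < ((c l : ℝ) + 1) * ρ (fun i => c i + if i = l then 1 else 0) :=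
      Npos c hc hcA l hl
    have pl' : 0 < ((c'' l : ℝ) + 1) * ρ (fun i => c'' i + if i = l then 1 else 0) :=
      Npos c'' hc''sum hc''A l hl
    have key : ((((c l : ℝ) + 1) * ρ (fun i => c i + if i = l then 1 else 0)) *
          ((((c'' l : ℝ) + 1) * ρ (fun i => c'' i + if i = l then 1 else 0)))) *
        ((((c j : ℝ) + 1) * ρ (fun i => c i + if i = j then 1 else 0)) *
          (((c'' k : ℝ) + 1) * ρ (fun i => c'' i + if i = k then 1 else 0)))
        = ((((c l : ℝ) + 1) * ρ (fun i => c i + if i = l then 1 else 0)) *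
          ((((c'' l : ℝ) + 1) * ρ (fun i => c'' i + if i = l then 1 else 0)))) *
        ((((c'' j : ℝ) + 1) * ρ (fun i => c'' i + if i = j then 1 else 0)) *
          (((c k : ℝ) + 1) * ρ (fun i => c i + if i = k then 1 else 0))) := by
      linear_combination
        (-((((c'' k : ℝ) + 1) * ρ (fun i => c'' i + if i = k then 1 else 0)) *
          (((c l : ℝ) + 1) * ρ (fun i => c i + if i = l then 1 else 0)))) * kj
        + ((((c'' j : ℝ) + 1) * ρ (fun i => c'' i + if i = j then 1 else 0)) *
          (((c l : ℝ) + 1) * ρ (fun i => c i + if i = l then 1 else 0))) * kk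
    exact mul_left_cancel₀ (by positivity) key
  refine ⟨part1, ?_⟩
  -- Part 2
  intro j hj c c' hc hcA hc' hc'A
  by_cases hA2 : ∃ m0, m0 ∈ A ∧ m0 ≠ j
  · obtain ⟨m0, hm0, hm0j⟩ := hA2
    have H : ∀ t : ℕ, ∀ b : Fin n → ℕ, ∑ i, b i = d - 1 → (∀ i, i ∉ A → b i = 0) →
        b m0 + t = d - 1 → P j b = P j (fun i => if i = m0 then d - 1 else 0) := by
      intro t
      induction t with
      | zero =>
        intro b hb hbA hbm
        have hb0 : ∀ i, i ≠ m0 → b i = 0 := by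
          intro i hi
          have h1 : b m0 + ∑ i ∈ Finset.univ.erase m0, b i = ∑ i, b i :=
            Finset.add_sum_erase _ b (Finset.mem_univ m0)
          have h2 : ∑ i ∈ Finset.univ.erase m0, b i = 0 := by omega
          have := Finset.sum_eq_zero_iff.mp h2 i (Finset.mem_erase.mpr ⟨hi, Finset.mem_univ i⟩)
          exact this
        have : b = fun i => if i = m0 then d - 1 else 0 := by
          funext i
          by_cases h : i = m0
          · subst h; simp; omega
          · simp [h, hb0 i h]
        rw [this]
      | succ t ih =>
        intro b hb hbA hbm
        have hex : ∃ l, l ≠ m0 ∧ 1 ≤ b l := by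
          by_contra h
          push_neg at h
          have : ∑ i, b i = b m0 :=
            Finset.sum_eq_single m0 (fun i _ hi => by have := h i hi; omega) (by simp)
          omega
        obtain ⟨l, hlm0, hbl⟩ := hex
        have hlA : l ∈ A := by by_contra h; have := hbA l h; omega
        have step := part1 j hj b hb hbA l hlA m0 hm0 hbl hm0j hlm0.symm
        rw [step]
        apply ih
        · rw [hsum_move b l m0 hlm0.symm hbl]; exact hb
        · intro i hi
          have h1 : i ≠ l := by rintro rfl; exact hi hlA
          have h2 : i ≠ m0 := by rintro rfl; exact hi hm0
          simp [h1, h2, hbA i hi]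
        · have : (b m0 - (if m0 = l then 1 else 0) + (if m0 = m0 then 1 else 0)) = b m0 + 1 := by
            simp [hlm0.symm]
          rw [this]; omega
    have hcm : c m0 ≤ d - 1 := by
      have := Finset.single_le_sum (f := c) (fun i _ => Nat.zero_le _) (Finset.mem_univ m0)
      omega
    have hcm' : c' m0 ≤ d - 1 := by
      have := Finset.single_le_sum (f := c') (fun i _ => Nat.zero_le _) (Finset.mem_univ m0)
      omega
    rw [H (d - 1 - c m0) c hc hcA (by omega), H (d - 1 - c' m0) c' hc' hc'A (by omega)]
  · push_neg at hA2
    have hall : ∀ b : Fin n → ℕ, ∑ i, b i = d - 1 → (∀ i, i ∉ A → b i = 0) →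
        b = fun i => if i = j then d - 1 else 0 := by
      intro b hb hbA
      have hb0 : ∀ i, i ≠ j → b i = 0 := by
        intro i hi
        by_cases h : i ∈ A
        · exact absurd (hA2 i h) hi
        · exact hbA i h
      have hbj : ∑ i, b i = b j :=
        Finset.sum_eq_single j (fun i _ hi => hb0 i hi) (by simp)
      funext i
      by_cases h : i = j
      · subst h; simp; omega
      · simp [h, hb0 i h]
    rw [hall c hc hcA, hall c' hc' hc'A]
end

section
/- Let n ≥ 1 and let p : Fin n → Fin n → ℝ be as in Example 4.2 with n = 3: p(1,1), p(1,2), p(1,3), p(2,1), p(2,3), p(3,1), p(3,2) ∈ (0,1), p(2,2) = p(3,3) = 0, satisfying p(1,1)+p(1,2)+p(1,3) = 1, p(2,1)+p(2,3) = 1, p(3,1)+p(3,2) = 1. Then the full cycle condition ∏_{s} p(i_s, i_{s+1})/p(i_{s+1}, i_s) = 1 for all cycles through edges with positive weight holds if and only if the single 3-cycle condition p(1,2) p(2,3) p(3,1) = p(2,1) p(3,2) p(1,3) holds. -/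
open Finset

lemma tele_prod (q : Fin 3 → ℝ) (hq : ∀ i, q i ≠ 0) (v : ℕ → Fin 3) :
    ∀ m : ℕ, 1 ≤ m →
      ∏ s ∈ Finset.Ico 1 m, q (v (s + 1)) / q (v s) = q (v m) / q (v 1) := by
  intro m hm
  induction m with
  | zero => omega
  | succ n ih =>
    rcases Nat.lt_or_ge 1 (n + 1) with h | h
    · have hn : 1 ≤ n := by omega
      rw [Finset.prod_Ico_succ_top hn, ih hn]
      field_simp [hq (v 1), hq (v n)]
    · have : n = 0 := by omega
      subst this
      simp [div_self (hq (v 1))]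

/-- Example 4.2: on the 3-state structure with forbidden self-loops at states 2
and 3, the full Kolmogorov cycle condition (26) reduces to the single 3-cycle
condition. Here the states 1, 2, 3 are represented by `0, 1, 2 : Fin 3`. -/
theorem cycle_condition_reduces_to_single_equation
    (p : Fin 3 → Fin 3 → ℝ)
    (h11 : p 0 0 ∈ Set.Ioo (0 : ℝ) 1) (h12 : p 0 1 ∈ Set.Ioo (0 : ℝ) 1)
    (h13 : p 0 2 ∈ Set.Ioo (0 : ℝ) 1) (h21 : p 1 0 ∈ Set.Ioo (0 : ℝ) 1)
    (h23 : p 1 2 ∈ Set.Ioo (0 : ℝ) 1) (h31 : p 2 0 ∈ Set.Ioo (0 : ℝ) 1)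
    (h32 : p 2 1 ∈ Set.Ioo (0 : ℝ) 1)
    (h22 : p 1 1 = 0) (h33 : p 2 2 = 0)
    (hrow1 : p 0 0 + p 0 1 + p 0 2 = 1)
    (hrow2 : p 1 0 + p 1 2 = 1)
    (hrow3 : p 2 0 + p 2 1 = 1) :
    ((∀ m : ℕ, 2 ≤ m → ∀ v : ℕ → Fin 3, v m = v 1 →
        (∀ s ∈ Finset.Ico 1 m, 0 < p (v s) (v (s + 1))) →
        ∏ s ∈ Finset.Ico 1 m, p (v s) (v (s + 1)) / p (v (s + 1)) (v s) = 1)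
      ↔ p 0 1 * p 1 2 * p 2 0 = p 1 0 * p 2 1 * p 0 2) := by
  obtain ⟨h11p, -⟩ := h11
  obtain ⟨h12p, -⟩ := h12
  obtain ⟨h13p, -⟩ := h13
  obtain ⟨h21p, -⟩ := h21
  obtain ⟨h23p, -⟩ := h23
  obtain ⟨h31p, -⟩ := h31
  obtain ⟨h32p, -⟩ := h32
  constructor
  · intro H
    set v : ℕ → Fin 3 := fun s => if s = 1 then 0 else if s = 2 then 1 else if s = 3 then 2 else 0 with hv
    have hcyc := H 4 (by norm_num) v (by simp [hv])
    have hpos : ∀ s ∈ Finset.Ico 1 4, 0 < p (v s) (v (s + 1)) := by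
      intro s hs
      rw [Finset.mem_Ico] at hs
      obtain ⟨h1, h2⟩ := hs
      interval_cases s <;> simpa [hv]
    have := hcyc hpos
    rw [show (4:ℕ) = 3 + 1 from rfl, Finset.prod_Ico_succ_top (by norm_num),
      show (3:ℕ) = 2 + 1 from rfl, Finset.prod_Ico_succ_top (by norm_num),
      show (2:ℕ) = 1 + 1 from rfl, Finset.prod_Ico_succ_top (by norm_num),
      Finset.Ico_self, Finset.prod_empty] at this
    simp only [hv] at this
    norm_num at this
    field_simp at this
    linear_combination this
  · intro heq m hm v hvm hpos
    set q : Fin 3 → ℝ := ![1, p 0 1 / p 1 0, p 0 2 / p 2 0] with hqdef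
    have hq0 : q 0 = 1 := rfl
    have hq1 : q 1 = p 0 1 / p 1 0 := rfl
    have hq2 : q 2 = p 0 2 / p 2 0 := rfl
    have hq : ∀ i, q i ≠ 0 := by
      intro i
      fin_cases i
      · show q 0 ≠ 0
        rw [hq0]; norm_num
      · show q 1 ≠ 0
        rw [hq1]; positivity
      · show q 2 ≠ 0
        rw [hq2]; positivity
    have key : ∀ i j : Fin 3, 0 < p i j → p i j / p j i = q j / q i := by
      intro i j hij
      fin_cases i <;> fin_cases j <;>
        simp only [Fin.zero_eta, Fin.mk_one, show ((⟨2, by omega⟩ : Fin 3) = 2) from rfl,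
          hq0, hq1, hq2] at hij ⊢
      · rw [div_self (ne_of_gt h11p)]; norm_num
      · rw [div_one]
      · rw [div_one]
      · rw [one_div_div]
      · exact absurd hij (by rw [h22]; exact lt_irrefl 0)
      · field_simp
        linear_combination heq
      · rw [one_div_div]
      · field_simp
        linear_combination -heq
      · exact absurd hij (by rw [h33]; exact lt_irrefl 0)
    have hprod : ∏ s ∈ Finset.Ico 1 m, p (v s) (v (s + 1)) / p (v (s + 1)) (v s)
        = ∏ s ∈ Finset.Ico 1 m, q (v (s + 1)) / q (v s) := by
      apply Finset.prod_congr rfl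
      intro s hs
      exact key _ _ (hpos s hs)
    rw [hprod, tele_prod q hq v m (by omega), hvm, div_self (hq (v 1))]
end
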